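/- For any randomized static strategy given by a probability vector f ∈ ℝⁿ and any admissible exchange rate sequence e, the ratio A(e)/∑_i f_i e_i = (max_i e_i)/(∑_i f_i e_i) is at most max_{1≤j≤n} α^j/(∑_i f_i (e_j)_i) over the downturn sequences e_j; hence the supremum of the competitive ratio over all admissible sequences is attained (as a supremum) on the finite set of downturns. -/

import Mathlib

theorem sup_attained_on_downturns (n : ℕ) (hn : 2 ≤ n) (α β : ℝ) (hα : 1 < α) (hβ : 1 < β)
    (f : ℕ → ℝ) (hf0 : ∀ i ∈ Finset.Icc 1 n, 0 ≤ f i)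
    (hf1 : ∑ i ∈ Finset.Icc 1 n, f i = 1)
    (d : ℕ → ℕ → ℝ)
    (hd : ∀ j i, d j i = if i ≤ j then α ^ i else α ^ j / β ^ (i - j))
    (e : ℕ → ℝ) (he0 : e 0 = 1) (hpos : ∀ i ∈ Finset.Icc 1 n, 0 < e i)
    (hadm : ∀ i ∈ Finset.Icc 1 n, e (i - 1) / β ≤ e i ∧ e i ≤ e (i - 1) * α) :
    (Finset.Icc 1 n).sup' (Finset.nonempty_Icc.mpr (by omega)) e /
        (∑ i ∈ Finset.Icc 1 n, f i * e i) ≤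
      (Finset.Icc 1 n).sup' (Finset.nonempty_Icc.mpr (by omega))
        (fun j => α ^ j / ∑ i ∈ Finset.Icc 1 n, f i * d j i) := by
  have hα0 : (0:ℝ) < α := by linarith
  have hβ0 : (0:ℝ) < β := by linarith
  have chainU : ∀ a b : ℕ, a ≤ b → b ≤ n → e b ≤ e a * α ^ (b - a) := by
    intro a b hab hbn
    induction b with
    | zero => interval_cases a; simp
    | succ b ih =>
      rcases Nat.eq_or_lt_of_le hab with h | h
      · subst h; simp
      · have hb : a ≤ b := Nat.lt_succ_iff.mp h
        have h1 := (hadm (b+1) (by simp [Finset.mem_Icc]; omega)).2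
        simp only [Nat.add_sub_cancel] at h1
        have h2 := ih hb (by omega)
        calc e (b+1) ≤ e b * α := h1
          _ ≤ (e a * α ^ (b - a)) * α := mul_le_mul_of_nonneg_right h2 hα0.le
          _ = e a * α ^ (b + 1 - a) := by
              rw [mul_assoc, ← pow_succ]
              congr 2
              omega
  have chainD : ∀ a b : ℕ, a ≤ b → b ≤ n → e a ≤ e b * β ^ (b - a) := by
    intro a b hab hbn
    induction b with
    | zero => interval_cases a; simp
    | succ b ih =>
      rcases Nat.eq_or_lt_of_le hab with h | h
      · subst h; simp
      · have hb : a ≤ b := Nat.lt_succ_iff.mp h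
        have h1 := (hadm (b+1) (by simp [Finset.mem_Icc]; omega)).1
        simp only [Nat.add_sub_cancel] at h1
        have h1' : e b ≤ e (b+1) * β := by
          rw [div_le_iff₀ hβ0] at h1; linarith
        have h2 := ih hb (by omega)
        calc e a ≤ e b * β ^ (b - a) := h2
          _ ≤ (e (b+1) * β) * β ^ (b - a) :=
              mul_le_mul_of_nonneg_right h1' (pow_nonneg hβ0.le _)
          _ = e (b+1) * β ^ (b + 1 - a) := by
              rw [mul_assoc, mul_comm β, ← pow_succ]
              congr 2
              omega
  have hne : (Finset.Icc 1 n).Nonempty := Finset.nonempty_Icc.mpr (by omega)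
  obtain ⟨j, hj, hje⟩ := Finset.exists_mem_eq_sup' hne e
  have hjm : 1 ≤ j ∧ j ≤ n := Finset.mem_Icc.mp hj
  have dpos : ∀ i, 0 < d j i := by
    intro i; rw [hd]; split <;> positivity
  have hfpos : ∃ i ∈ Finset.Icc 1 n, 0 < f i := by
    by_contra h
    push_neg at h
    have : ∑ i ∈ Finset.Icc 1 n, f i ≤ 0 := Finset.sum_nonpos h
    linarith
  obtain ⟨i0, hi0, hfi0⟩ := hfpos
  have hS : 0 < ∑ i ∈ Finset.Icc 1 n, f i * e i := by
    apply Finset.sum_pos'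
    · intro i hi; exact mul_nonneg (hf0 i hi) (hpos i hi).le
    · exact ⟨i0, hi0, mul_pos hfi0 (hpos i0 hi0)⟩
  have hT : 0 < ∑ i ∈ Finset.Icc 1 n, f i * d j i := by
    apply Finset.sum_pos'
    · intro i hi; exact mul_nonneg (hf0 i hi) (dpos i).le
    · exact ⟨i0, hi0, mul_pos hfi0 (dpos i0)⟩
  have key : ∀ i ∈ Finset.Icc 1 n, e j * d j i ≤ α ^ j * e i := by
    intro i hi
    have him := Finset.mem_Icc.mp hi
    rw [hd]
    split_ifs with h
    · have h1 := chainU i j h hjm.2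
      calc e j * α ^ i ≤ (e i * α ^ (j - i)) * α ^ i :=
            mul_le_mul_of_nonneg_right h1 (pow_nonneg hα0.le _)
        _ = α ^ j * e i := by
            rw [mul_assoc, ← pow_add, Nat.sub_add_cancel h, mul_comm]
    · push_neg at h
      have h1 := chainD j i h.le him.2
      have hb : (0:ℝ) < β ^ (i - j) := pow_pos hβ0 _
      rw [← mul_div_assoc, div_le_iff₀ hb]
      have := mul_le_mul_of_nonneg_right h1 (pow_nonneg hα0.le j)
      nlinarith [pow_pos hα0 j]
  have hsum : e j * ∑ i ∈ Finset.Icc 1 n, f i * d j i ≤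
      α ^ j * ∑ i ∈ Finset.Icc 1 n, f i * e i := by
    rw [Finset.mul_sum, Finset.mul_sum]
    apply Finset.sum_le_sum
    intro i hi
    calc e j * (f i * d j i) = f i * (e j * d j i) := by ring
      _ ≤ f i * (α ^ j * e i) := mul_le_mul_of_nonneg_left (key i hi) (hf0 i hi)
      _ = α ^ j * (f i * e i) := by ring
  calc (Finset.Icc 1 n).sup' hne e / (∑ i ∈ Finset.Icc 1 n, f i * e i)
      = e j / (∑ i ∈ Finset.Icc 1 n, f i * e i) := by rw [hje]
    _ ≤ α ^ j / (∑ i ∈ Finset.Icc 1 n, f i * d j i) := by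
        rw [div_le_div_iff₀ hS hT]; linarith
    _ ≤ _ := Finset.le_sup' (fun j => α ^ j / ∑ i ∈ Finset.Icc 1 n, f i * d j i) hj
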